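/- Property Par(k) implies k-mixing: Let (f_t) be a measure-preserving flow on (X, μ) that is mixing of order k−1 and satisfies property Par(k): for all Lipschitz φ₀, …, φ_{k−1} with at least one μ(φ_j) = 0 and every ε > 0, there exist t_ε, H_ε ≥ 1 such that |∫_T ∏_{i=0}^{k−1} φ_i ∘ f_{t_i} dμ| ≤ ε for all k-tuples of times t with Δt ≥ t_ε and all towers T of height ≥ H_ε. Then (f_t) is mixing of order k. -/

import Mathlib

open MeasureTheory Set
open scoped NNReal

/-- A tower for a flow `f`: the union of the images `f t '' B` for `t ∈ [0, h]`,
with pairwise disjoint levels. -/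
def IsTower {Y : Type*} (f : ℝ → Y → Y) (B : Set Y) (h : ℝ) (T : Set Y) : Prop :=
  0 ≤ h ∧ T = ⋃ t ∈ Set.Icc (0:ℝ) h, f t '' B ∧
    ∀ t ∈ Set.Icc (0:ℝ) h, ∀ t' ∈ Set.Icc (0:ℝ) h, t ≠ t' →
      Disjoint (f t '' B) (f t' '' B)

/-- `t : Fin k → ℝ` is a `k`-tuple of times with all consecutive gaps at least `T₀`:
`t` is strictly increasing, starts at `0`, and `t_{i+1} - t_i ≥ T₀`. -/
def IsKTupleWithGap (k : ℕ) (t : Fin k → ℝ) (T₀ : ℝ) : Prop :=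
  StrictMono t ∧ (∀ hk : 0 < k, t ⟨0, hk⟩ = 0) ∧
    ∀ i : ℕ, (hi : i + 1 < k) → T₀ ≤ t ⟨i + 1, hi⟩ - t ⟨i, Nat.lt_of_succ_lt hi⟩

/-- The flow `f` is mixing of order `k`: multiple correlations of compactly
supported Lipschitz functions converge to the product of the means as the minimal
gap of the tuple of times tends to infinity. -/
def MixingOfOrder {X : Type*} [MetricSpace X] [MeasurableSpace X]
    (μ : Measure X) (f : ℝ → X → X) (k : ℕ) : Prop :=
  ∀ φ : Fin k → X → ℝ,
    (∀ i, ∃ K : ℝ≥0, LipschitzWith K (φ i)) → (∀ i, HasCompactSupport (φ i)) →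
    ∀ ε > (0:ℝ), ∃ T₀ : ℝ, ∀ t : Fin k → ℝ, IsKTupleWithGap k t T₀ →
      |(∫ x, ∏ i, φ i (f (t i) x) ∂μ) - ∏ i, ∫ x, φ i x ∂μ| ≤ ε

/-- Auxiliary: a measurable, uniformly bounded function is integrable w.r.t. a
finite measure. -/
lemma integrable_of_abs_le' {X : Type*} [MeasurableSpace X] {μ : Measure X}
    [IsFiniteMeasure μ] {g : X → ℝ} (hm : Measurable g) {C : ℝ}
    (hC : ∀ x, |g x| ≤ C) : Integrable g μ :=
  ⟨hm.aestronglyMeasurable, HasFiniteIntegral.of_bounded (C := C)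
    (Filter.Eventually.of_forall fun x => by simpa [Real.norm_eq_abs] using hC x)⟩

/-- Auxiliary: bound on an integral of a bounded function against a finite measure. -/
lemma abs_integral_le_of_abs_le' {X : Type*} [MeasurableSpace X] (ν : Measure X)
    [IsFiniteMeasure ν] {g : X → ℝ} {C : ℝ} (hC : ∀ x, |g x| ≤ C) :
    |∫ x, g x ∂ν| ≤ C * (ν Set.univ).toReal := by
  simpa [Real.norm_eq_abs, measureReal_def] using
    norm_integral_le_of_norm_le_const (μ := ν) (f := g) (C := C)
      (Filter.Eventually.of_forall fun x => by simpa [Real.norm_eq_abs] using hC x)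

/-- Property Par(k) together with mixing of order `k-1` implies mixing of order `k`. -/
theorem mixing_of_order_of_park
    {X : Type*} [MetricSpace X] [MeasurableSpace X] [BorelSpace X]
    (μ : Measure X) [IsProbabilityMeasure μ]
    (f : ℝ → X → X) (hf0 : f 0 = id) (hfadd : ∀ s t, f (s + t) = f s ∘ f t)
    (hmp : ∀ t, MeasurePreserving (f t) μ μ)
    (k : ℕ) (hk : 2 ≤ k)
    -- Rokhlin towers of arbitrary height with measure arbitrarily close to 1 exist:
    (hRokhlin : ∀ ε > (0:ℝ), ∀ H : ℝ, ∃ (B T : Set X) (h : ℝ), IsTower f B h T ∧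
      H ≤ h ∧ μ Tᶜ ≤ ENNReal.ofReal ε)
    -- mixing of order k-1:
    (hmix : MixingOfOrder μ f (k - 1))
    -- property Par(k):
    (hPar : ∀ φ : Fin k → X → ℝ,
      (∀ i, ∃ K : ℝ≥0, LipschitzWith K (φ i)) →
      (∀ i, ∃ C, ∀ x, |φ i x| ≤ C) →
      (∃ j, ∫ x, φ j x ∂μ = 0) →
      ∀ ε > (0:ℝ), ∃ tε Hε : ℝ, 1 ≤ tε ∧ 1 ≤ Hε ∧
        ∀ t : Fin k → ℝ, IsKTupleWithGap k t tε →
          ∀ (B T : Set X) (h : ℝ), IsTower f B h T → Hε ≤ h →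
            |∫ x in T, ∏ i, φ i (f (t i) x) ∂μ| ≤ ε) :
    MixingOfOrder μ f k := by
  rcases Nat.exists_eq_succ_of_ne_zero (by omega : k ≠ 0) with ⟨n, rfl⟩
  have hmix' : MixingOfOrder μ f n := by simpa using hmix
  intro φ hLip hsupp ε hε
  set L : Fin (n + 1) := Fin.last n with hLdef
  -- continuity, measurability, bounds
  have hcont : ∀ i, Continuous (φ i) := fun i => (hLip i).choose_spec.continuous
  have hbdd : ∀ i, ∃ C, 0 ≤ C ∧ ∀ x, |φ i x| ≤ C := by
    intro i
    obtain ⟨C, hC⟩ := (hsupp i).exists_bound_of_continuous (hcont i)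
    exact ⟨max C 0, le_max_right _ _, fun x =>
      le_trans (by simpa [Real.norm_eq_abs] using hC x) (le_max_left _ _)⟩
  choose M hM0 hMb using hbdd
  have hmeas : ∀ (i : Fin (n + 1)) (s : ℝ), Measurable fun x => φ i (f s x) :=
    fun i s => (hcont i).measurable.comp (hmp s).measurable
  have hintφ : ∀ i, Integrable (φ i) μ := fun i =>
    integrable_of_abs_le' (hcont i).measurable (hMb i)
  set c : ℝ := ∫ x, φ L x ∂μ with hc
  -- the centered family
  set Ψ : Fin (n + 1) → X → ℝ := fun i x => φ i x - if i = L then c else 0 with hΨdef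
  have hΨLip : ∀ i, ∃ K : ℝ≥0, LipschitzWith K (Ψ i) := by
    intro i
    obtain ⟨K, hK⟩ := hLip i
    refine ⟨K, LipschitzWith.of_dist_le_mul fun x y => ?_⟩
    simpa [Ψ, Real.dist_eq, sub_sub_sub_cancel_right] using hK.dist_le_mul x y
  have hΨbdd : ∀ i, ∃ C, ∀ x, |Ψ i x| ≤ C := by
    intro i
    refine ⟨M i + |c|, fun x => ?_⟩
    calc |Ψ i x| ≤ |φ i x| + |if i = L then c else 0| := abs_sub _ _
      _ ≤ M i + |c| := add_le_add (hMb i x)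
          (by split_ifs with hi
              · exact le_refl _
              · simpa using abs_nonneg c)
  have hΨmean : ∫ x, Ψ L x ∂μ = 0 := by
    have heq : ∫ x, Ψ L x ∂μ = ∫ x, (φ L x - c) ∂μ :=
      integral_congr_ae (Filter.Eventually.of_forall fun x => by simp [Ψ])
    rw [heq, integral_sub (hintφ L) (integrable_const c), integral_const]
    simp [← hc]
  -- bounds for the products
  set MP : ℝ := ∏ j : Fin n, M j.castSucc with hMPdef
  have hMP0 : 0 ≤ MP := Finset.prod_nonneg fun j _ => hM0 _
  set Mg : ℝ := MP * (M L + |c|) with hMgdef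
  have hMg0 : 0 ≤ Mg := mul_nonneg hMP0 (by have := hM0 L; positivity)
  set δ : ℝ := ε / (6 * (Mg + 1)) with hδdef
  have hδ0 : 0 < δ := by positivity
  have hMgδ : Mg * δ ≤ ε / 6 := by
    have h1 : Mg * δ ≤ (Mg + 1) * δ := by nlinarith
    have h2 : (Mg + 1) * δ = ε / 6 := by
      have hne : Mg + 1 ≠ 0 := by linarith
      rw [hδdef, mul_comm (Mg + 1), div_mul_eq_mul_div, mul_comm (6:ℝ), ← div_div,
        mul_div_cancel_right₀ _ hne]
    linarith
  -- Par(k) data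
  obtain ⟨tε, Hε, htε1, hHε1, hparbound⟩ :=
    hPar Ψ hΨLip hΨbdd ⟨L, hΨmean⟩ (ε / 3) (by positivity)
  -- tower
  obtain ⟨B, T, h, htower, hHh, hTc⟩ := hRokhlin δ hδ0 Hε
  -- mixing of order n data
  set φ' : Fin n → X → ℝ := fun j => φ j.castSucc with hφ'def
  obtain ⟨T₁, hmixb⟩ := hmix' φ' (fun j => hLip _) (fun j => hsupp _)
    (ε / (3 * (|c| + 1))) (by positivity)
  refine ⟨max T₁ tε, ?_⟩
  intro t ht
  set t' : Fin n → ℝ := fun j => t j.castSucc with ht'def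
  have ht'gap : IsKTupleWithGap n t' T₁ := by
    refine ⟨fun a b hab => ht.1 (by simpa using hab), ?_, ?_⟩
    · intro hn0
      have h0 : (Fin.castSucc (⟨0, hn0⟩ : Fin n) : Fin (n + 1)) = ⟨0, by omega⟩ := rfl
      simpa [t', h0] using ht.2.1 (by omega)
    · intro i hi
      have h1 : (Fin.castSucc (⟨i + 1, hi⟩ : Fin n) : Fin (n + 1))
          = ⟨i + 1, by omega⟩ := rfl
      have h2 : (Fin.castSucc (⟨i, Nat.lt_of_succ_lt hi⟩ : Fin n) : Fin (n + 1))
          = ⟨i, by omega⟩ := rfl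
      have := ht.2.2 i (by omega)
      simp only [t', h1, h2]
      exact le_trans (le_max_left _ _) this
  have htεgap : IsKTupleWithGap (n + 1) t tε :=
    ⟨ht.1, ht.2.1, fun i hi => le_trans (le_max_right _ _) (ht.2.2 i hi)⟩
  -- the key functions
  set P : X → ℝ := fun x => ∏ j : Fin n, φ' j (f (t' j) x) with hPdef
  set g : X → ℝ := fun x => P x * (φ L (f (t L) x) - c) with hgdef
  have hPm : Measurable P := Finset.measurable_prod _ fun j _ => hmeas _ _
  have hgm : Measurable g := hPm.mul ((hmeas L (t L)).sub measurable_const)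
  have hPb : ∀ x, |P x| ≤ MP := by
    intro x
    rw [hPdef]
    simp only
    rw [Finset.abs_prod]
    exact Finset.prod_le_prod (fun j _ => abs_nonneg _) (fun j _ => hMb _ _)
  have hgb : ∀ x, |g x| ≤ Mg := by
    intro x
    rw [hgdef, hMgdef]
    simp only
    rw [abs_mul]
    refine mul_le_mul (hPb x) ?_ (abs_nonneg _) hMP0
    calc |φ L (f (t L) x) - c| ≤ |φ L (f (t L) x)| + |c| := abs_sub _ _
      _ ≤ M L + |c| := by gcongr; exact hMb _ _
  have hPint : Integrable P μ := integrable_of_abs_le' hPm (hPb)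
  have hgint : Integrable g μ := integrable_of_abs_le' hgm (hgb)
  -- product decompositions
  have hprodφ : ∀ x, ∏ i, φ i (f (t i) x) = P x * φ L (f (t L) x) := fun x =>
    Fin.prod_univ_castSucc fun i => φ i (f (t i) x)
  have hprodΨ : (fun x => ∏ i, Ψ i (f (t i) x)) = g := by
    funext x
    rw [Fin.prod_univ_castSucc fun i => Ψ i (f (t i) x)]
    rw [hgdef]
    simp only
    congr 1
    · exact Finset.prod_congr rfl fun j _ => by
        simp [Ψ, hLdef, (Fin.castSucc_lt_last j).ne, φ', t']
    · simp [Ψ, hLdef]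
  -- Step A: Par bound on the tower
  have hA : |∫ x in T, g x ∂μ| ≤ ε / 3 := by
    have := hparbound t htεgap B T h htower hHh
    rwa [show (fun x => ∏ i, Ψ i (f (t i) x)) = g from hprodΨ] at this
  -- Step B: comparing ∫ g with ∫_T g
  set S : Set X := (toMeasurable μ Tᶜ)ᶜ with hSdef
  have hS : MeasurableSet S := (measurableSet_toMeasurable μ Tᶜ).compl
  have hST : S ⊆ T := by
    rw [hSdef, compl_subset_comm]
    exact subset_toMeasurable μ Tᶜ
  have hSc : μ Sᶜ ≤ ENNReal.ofReal δ := by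
    rw [hSdef, compl_compl, measure_toMeasurable]
    exact hTc
  have eq1 : (∫ x in S, g x ∂μ) + ∫ x in Sᶜ, g x ∂μ = ∫ x, g x ∂μ :=
    integral_add_compl hS hgint
  have eq2 : (∫ x in S, g x ∂μ) + ∫ x, g x ∂(μ.restrict (Sᶜ ∩ T))
      = ∫ x in T, g x ∂μ := by
    have := integral_add_compl (μ := μ.restrict T) hS (hgint.restrict)
    rwa [Measure.restrict_restrict hS, inter_eq_left.mpr hST,
      Measure.restrict_restrict hS.compl] at this
  have hmeasb : ∀ (s : Set X), μ s ≤ ENNReal.ofReal δ →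
      |∫ x, g x ∂(μ.restrict s)| ≤ Mg * δ := by
    intro s hs
    refine le_trans (abs_integral_le_of_abs_le' (μ.restrict s) hgb) ?_
    rw [Measure.restrict_apply_univ]
    exact mul_le_mul_of_nonneg_left (ENNReal.toReal_le_of_le_ofReal hδ0.le hs) hMg0
  have hb1 : |∫ x in Sᶜ, g x ∂μ| ≤ Mg * δ := hmeasb Sᶜ hSc
  have hb2 : |∫ x, g x ∂(μ.restrict (Sᶜ ∩ T))| ≤ Mg * δ :=
    hmeasb _ (le_trans (measure_mono inter_subset_left) hSc)
  have hB : |∫ x, g x ∂μ| ≤ 2 * (ε / 3) := by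
    have habs : |∫ x, g x ∂μ| ≤ |∫ x in T, g x ∂μ| + 2 * (Mg * δ) := by
      have : ∫ x, g x ∂μ = (∫ x in T, g x ∂μ)
          + ((∫ x in Sᶜ, g x ∂μ) - ∫ x, g x ∂(μ.restrict (Sᶜ ∩ T))) := by
        rw [← eq1, ← eq2]; ring
      rw [this]
      calc |_ + _| ≤ |∫ x in T, g x ∂μ|
            + |(∫ x in Sᶜ, g x ∂μ) - ∫ x, g x ∂(μ.restrict (Sᶜ ∩ T))| := abs_add_le _ _
        _ ≤ |∫ x in T, g x ∂μ| + 2 * (Mg * δ) := by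
            have := abs_sub (∫ x in Sᶜ, g x ∂μ) (∫ x, g x ∂(μ.restrict (Sᶜ ∩ T)))
            linarith
    linarith
  -- Step C: mixing of order n
  have hC : |c| * |(∫ x, P x ∂μ) - ∏ j, ∫ x, φ' j x ∂μ| ≤ ε / 3 := by
    have hm := hmixb t' ht'gap
    have h1 : |c| * |(∫ x, P x ∂μ) - ∏ j, ∫ x, φ' j x ∂μ|
        ≤ |c| * (ε / (3 * (|c| + 1))) :=
      mul_le_mul_of_nonneg_left hm (abs_nonneg c)
    have h2 : |c| * (ε / (3 * (|c| + 1))) ≤ ε / 3 := by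
      have h3 : (0:ℝ) ≤ |c| := abs_nonneg c
      have h5 : (0:ℝ) ≤ ε / (3 * (|c| + 1)) := by positivity
      have h6 : |c| * (ε / (3 * (|c| + 1))) ≤ (|c| + 1) * (ε / (3 * (|c| + 1))) := by
        nlinarith
      have h7 : (|c| + 1) * (ε / (3 * (|c| + 1))) = ε / 3 := by
        field_simp
      linarith
    linarith
  -- assembly
  have hint_eq : ∫ x, ∏ i, φ i (f (t i) x) ∂μ = (∫ x, g x ∂μ) + c * ∫ x, P x ∂μ := by
    have hfun : (fun x => ∏ i, φ i (f (t i) x)) = fun x => g x + c * P x := by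
      funext x
      rw [hprodφ x, hgdef]
      ring
    rw [hfun, integral_add hgint (hPint.const_mul c), integral_const_mul c P]
  have hprodc : ∏ i, ∫ x, φ i x ∂μ = (∏ j, ∫ x, φ' j x ∂μ) * c := by
    rw [Fin.prod_univ_castSucc fun i => ∫ x, φ i x ∂μ]
  have key : (∫ x, ∏ i, φ i (f (t i) x) ∂μ) - ∏ i, ∫ x, φ i x ∂μ
      = (∫ x, g x ∂μ) + c * ((∫ x, P x ∂μ) - ∏ j, ∫ x, φ' j x ∂μ) := by
    rw [hint_eq, hprodc]; ring
  rw [key]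
  calc |(∫ x, g x ∂μ) + c * ((∫ x, P x ∂μ) - ∏ j, ∫ x, φ' j x ∂μ)|
      ≤ |∫ x, g x ∂μ| + |c * ((∫ x, P x ∂μ) - ∏ j, ∫ x, φ' j x ∂μ)| := abs_add_le _ _
    _ ≤ 2 * (ε / 3) + |c| * |(∫ x, P x ∂μ) - ∏ j, ∫ x, φ' j x ∂μ| := by
        rw [abs_mul]; linarith
    _ ≤ 2 * (ε / 3) + ε / 3 := by linarith
    _ = ε := by ring
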